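/- arXiv:1505.06463 — 4 statements merged into one kernel-verified Lean document; each statement's English description precedes it below -/
import Mathlib

section
/- Let α₂ > 0, α₁, α₀ be real numbers. All roots of the cubic polynomial σ³ + α₂σ² + α₁σ + α₀ have negative real part if and only if α₀ > 0, α₁ > 0, and α₁α₂ - α₀ > 0. -/
private lemma cubic_real_root (a b c : ℝ) : ∃ r : ℝ, r^3 + a*r^2 + b*r + c = 0 := by
  set M : ℝ := 1 + |a| + |b| + |c| with hM
  have hM1 : 1 ≤ M := by rw [hM]; nlinarith [abs_nonneg a, abs_nonneg b, abs_nonneg c]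
  have ha : |a| ≤ M - 1 := by rw [hM]; nlinarith [abs_nonneg a, abs_nonneg b, abs_nonneg c]
  have hb : |b| ≤ M - 1 := by rw [hM]; nlinarith [abs_nonneg a, abs_nonneg b, abs_nonneg c]
  have hc : |c| ≤ M - 1 := by rw [hM]; nlinarith [abs_nonneg a, abs_nonneg b, abs_nonneg c]
  have hcont : ContinuousOn (fun x : ℝ => x^3 + a*x^2 + b*x + c) (Set.Icc (-M) M) := by
    fun_prop
  have hmem : (0:ℝ) ∈ Set.Icc ((-M)^3 + a*(-M)^2 + b*(-M) + c) (M^3 + a*M^2 + b*M + c) := by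
    constructor
    · have h1 := abs_le.1 ha; have h2 := abs_le.1 hb; have h3 := abs_le.1 hc
      nlinarith [sq_nonneg M, sq_nonneg (M-1), mul_pos (lt_of_lt_of_le one_pos hM1) (lt_of_lt_of_le one_pos hM1)]
    · have h1 := abs_le.1 ha; have h2 := abs_le.1 hb; have h3 := abs_le.1 hc
      nlinarith [sq_nonneg M, sq_nonneg (M-1)]
  obtain ⟨r, _, hr⟩ := intermediate_value_Icc (by linarith : (-M:ℝ) ≤ M) hcont hmem
  exact ⟨r, hr⟩

/-- Routh–Hurwitz criterion for a monic real cubic: all complex roots of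
`σ³ + α₂σ² + α₁σ + α₀` (with `α₂ > 0`) have negative real part iff
`α₀ > 0`, `α₁ > 0` and `α₁α₂ - α₀ > 0`. -/
theorem routh_hurwitz_cubic (α₂ α₁ α₀ : ℝ) (hα₂ : 0 < α₂) :
    (∀ σ : ℂ, σ ^ 3 + (α₂ : ℂ) * σ ^ 2 + (α₁ : ℂ) * σ + (α₀ : ℂ) = 0 → σ.re < 0) ↔
      (0 < α₀ ∧ 0 < α₁ ∧ 0 < α₁ * α₂ - α₀) := by
  constructor
  · intro h
    obtain ⟨r, hroot⟩ := cubic_real_root α₂ α₁ α₀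
    have hr : r < 0 := by
      have := h (r : ℂ) (by exact_mod_cast congrArg (fun x : ℝ => (x : ℂ)) hroot)
      simpa using this
    obtain ⟨b, hbdef⟩ : ∃ b : ℝ, b = α₂ + r := ⟨_, rfl⟩
    obtain ⟨c, hcdef⟩ : ∃ c : ℝ, c = α₁ + α₂*r + r^2 := ⟨_, rfl⟩
    have hbc : 0 < b ∧ 0 < c := by
      rcases le_or_gt (4*c) (b^2) with hdisc | hdisc
      · -- two real roots of the quadratic
        obtain ⟨s, hsdef⟩ : ∃ s : ℝ, s = Real.sqrt (b^2 - 4*c) := ⟨_, rfl⟩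
        have hs0 : 0 ≤ s := hsdef ▸ Real.sqrt_nonneg _
        have hs2 : s^2 = b^2 - 4*c := by rw [hsdef]; exact Real.sq_sqrt (by linarith)
        have hq1 : ((-b + s)/2)^2 + b*((-b + s)/2) + c = 0 := by linear_combination hs2/4
        have hq2 : ((-b - s)/2)^2 + b*((-b - s)/2) + c = 0 := by linear_combination hs2/4
        have hx1 : ((-b + s)/2) < 0 := by
          have := h (((-b + s)/2 : ℝ) : ℂ) ?_
          · simpa using this
          · have heq : ((-b + s)/2)^3 + α₂*((-b + s)/2)^2 + α₁*((-b + s)/2) + α₀ = 0 := by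
              linear_combination ((-b + s)/2 - r) * hq1 + hroot
                - ((-b + s)/2)*((-b + s)/2 - r) * hbdef - ((-b + s)/2 - r) * hcdef
            exact_mod_cast congrArg (fun x : ℝ => (x : ℂ)) heq
        have hx2 : ((-b - s)/2) < 0 := by
          have := h (((-b - s)/2 : ℝ) : ℂ) ?_
          · simpa using this
          · have heq : ((-b - s)/2)^3 + α₂*((-b - s)/2)^2 + α₁*((-b - s)/2) + α₀ = 0 := by
              linear_combination ((-b - s)/2 - r) * hq2 + hroot
                - ((-b - s)/2)*((-b - s)/2 - r) * hbdef - ((-b - s)/2 - r) * hcdef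
            exact_mod_cast congrArg (fun x : ℝ => (x : ℂ)) heq
        constructor
        · linarith
        · nlinarith [mul_pos (neg_pos.2 hx1) (neg_pos.2 hx2), hs2]
      · -- complex conjugate roots
        have ht2 : (Real.sqrt (4*c - b^2))^2 = 4*c - b^2 := Real.sq_sqrt (by linarith)
        obtain ⟨t, htdef⟩ : ∃ t : ℝ, t = Real.sqrt (4*c - b^2) := ⟨_, rfl⟩
        rw [← htdef] at ht2
        have hcpos : 0 < c := by nlinarith [sq_nonneg b]
        have hq : ((↑(-b/2) : ℂ) + (↑(t/2) : ℂ) * Complex.I)^2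
            + (b:ℂ)*((↑(-b/2) : ℂ) + (↑(t/2) : ℂ) * Complex.I) + (c:ℂ) = 0 := by
          have ht2C : (t:ℂ)^2 = 4*(c:ℂ) - (b:ℂ)^2 := by exact_mod_cast congrArg (fun x : ℝ => (x : ℂ)) ht2
          push_cast
          linear_combination ((t:ℂ)^2/4) * Complex.I_sq - (1/4) * ht2C
            + ((t:ℂ)/4) * Complex.I_sq * (0 : ℂ)
        have hcube : ((↑(-b/2) : ℂ) + (↑(t/2) : ℂ) * Complex.I)^3
            + (α₂:ℂ)*((↑(-b/2) : ℂ) + (↑(t/2) : ℂ) * Complex.I)^2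
            + (α₁:ℂ)*((↑(-b/2) : ℂ) + (↑(t/2) : ℂ) * Complex.I) + (α₀:ℂ) = 0 := by
          have hrootC : (r:ℂ)^3 + (α₂:ℂ)*(r:ℂ)^2 + (α₁:ℂ)*(r:ℂ) + (α₀:ℂ) = 0 := by
            exact_mod_cast congrArg (fun x : ℝ => (x : ℂ)) hroot
          have hbC : (b:ℂ) = (α₂:ℂ) + (r:ℂ) := by exact_mod_cast congrArg (fun x : ℝ => (x : ℂ)) hbdef
          have hcC : (c:ℂ) = (α₁:ℂ) + (α₂:ℂ)*(r:ℂ) + (r:ℂ)^2 := by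
            rw [hcdef]; push_cast; ring
          set σ : ℂ := (↑(-b/2) : ℂ) + (↑(t/2) : ℂ) * Complex.I with hσdef
          linear_combination (σ - (r:ℂ)) * hq + hrootC - σ*(σ - (r:ℂ)) * hbC - (σ - (r:ℂ)) * hcC
        have hre := h _ hcube
        have hre' : ((↑(-b/2) : ℂ) + (↑(t/2) : ℂ) * Complex.I).re = -b/2 := by simp
        constructor
        · rw [hre'] at hre; linarith
        · exact hcpos
    obtain ⟨hbpos, hcpos⟩ := hbc
    have hkey : α₀ = -r * c := by rw [hcdef]; nlinarith [hroot]
    refine ⟨?_, ?_, ?_⟩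
    · nlinarith [mul_pos (neg_pos.2 hr) hcpos]
    · have : α₁ = c - b*r := by rw [hbdef, hcdef]; ring
      rw [this]; nlinarith [mul_pos hbpos (neg_pos.2 hr)]
    · have : α₁ * α₂ - α₀ = b*c + b*b*(-r) + b*r^2 := by
        rw [hkey, hbdef, hcdef]; ring
      rw [this]
      nlinarith [mul_pos hbpos hcpos, mul_pos (mul_pos hbpos hbpos) (neg_pos.2 hr), mul_nonneg hbpos.le (sq_nonneg r)]
  · rintro ⟨h0, h1, h2⟩ σ hσ
    by_contra hcon
    push_neg at hcon
    obtain ⟨x, hx⟩ : ∃ x : ℝ, x = σ.re := ⟨_, rfl⟩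
    obtain ⟨y, hy⟩ : ∃ y : ℝ, y = σ.im := ⟨_, rfl⟩
    have hσ' : σ = (x:ℂ) + (y:ℂ)*Complex.I := by rw [hx, hy]; exact (Complex.re_add_im σ).symm
    rw [hσ'] at hσ
    have hre := congrArg Complex.re hσ
    have him := congrArg Complex.im hσ
    simp only [Complex.add_re, Complex.add_im, Complex.mul_re, Complex.mul_im,
      Complex.ofReal_re, Complex.ofReal_im, Complex.I_re, Complex.I_im, Complex.zero_re,
      Complex.zero_im, pow_succ, pow_zero, one_mul] at hre him
    ring_nf at hre him
    rw [← hx] at hcon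
    rcases eq_or_ne y 0 with hy0 | hy0
    · rw [hy0] at hre
      nlinarith [mul_nonneg (mul_nonneg hcon hcon) hcon, mul_nonneg hα₂.le (mul_nonneg hcon hcon), mul_nonneg h1.le hcon]
    · have hy2 : y^2 = 3*x^2 + 2*α₂*x + α₁ := by
        have : y * (3*x^2 + 2*α₂*x + α₁ - y^2) = 0 := by linear_combination him
        rcases mul_eq_zero.1 this with h | h
        · exact absurd h hy0
        · linarith
      rw [hy2] at hre
      nlinarith [mul_nonneg (mul_nonneg hcon hcon) hcon, mul_nonneg hα₂.le (mul_nonneg hcon hcon),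
        mul_nonneg h1.le hcon, mul_nonneg (mul_nonneg hα₂.le hα₂.le) hcon]
end

section
/- Let d₁, d₂, λ, ξ, v̄, ū, k, L > 0 with d₁ ≥ d₂ and 0 < ξ. Set m = (kπ/L)². Then J₁ + J₂ < 0, where J₁ = (d₁d₂(m+λ) - ξd₁v̄)((d₁+1)m+λ) + ξd₂v̄((d₂+1)m+λ) and J₂ = -(d₁+d₂)²d₂ m(m+λ) - (d₁+d₂)d₂(m+λ)² - (d₁+d₂)d₁d₂² m². -/
/-- Case 1 (`d₁ ≥ d₂`) in the proof that `χ_k^S < χ_k^H` for the growth-free system: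
with `m = (kπ/L)²`, the quantity `J₁ + J₂` is negative. -/
theorem J_sum_neg_case1 (d₁ d₂ lam ξ vbar ubar k L m J₁ J₂ : ℝ)
    (hd₁ : 0 < d₁) (hd₂ : 0 < d₂) (hlam : 0 < lam) (hξ : 0 < ξ) (hv : 0 < vbar)
    (hu : 0 < ubar) (hk : 0 < k) (hL : 0 < L) (hd : d₂ ≤ d₁)
    (hm : m = (k * Real.pi / L) ^ 2)
    (hJ₁ : J₁ = (d₁ * d₂ * (m + lam) - ξ * d₁ * vbar) * ((d₁ + 1) * m + lam) +
      ξ * d₂ * vbar * ((d₂ + 1) * m + lam))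
    (hJ₂ : J₂ = -(d₁ + d₂) ^ 2 * d₂ * m * (m + lam) - (d₁ + d₂) * d₂ * (m + lam) ^ 2 -
      (d₁ + d₂) * d₁ * d₂ ^ 2 * m ^ 2) :
    J₁ + J₂ < 0 := by
  have hm0 : 0 < m := by
    rw [hm]
    have : k * Real.pi / L ≠ 0 := by positivity
    positivity
  subst hJ₁ hJ₂
  have h1 : ξ * vbar * (d₂ * ((d₂ + 1) * m + lam) - d₁ * ((d₁ + 1) * m + lam)) ≤ 0 := by
    have : d₂ * ((d₂ + 1) * m + lam) ≤ d₁ * ((d₁ + 1) * m + lam) := by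
      nlinarith [mul_nonneg (sub_nonneg.2 hd) hlam.le,
        mul_nonneg (mul_nonneg (sub_nonneg.2 hd) (by positivity : (0:ℝ) ≤ d₁ + d₂ + 1)) hm0.le]
    nlinarith [mul_pos hξ hv]
  nlinarith [mul_pos hd₂ (mul_pos (add_pos hm0 hlam) hm0),
    mul_pos hd₂ (mul_pos (add_pos hm0 hlam) hlam),
    mul_pos (mul_pos hd₂ hd₂) (mul_pos (add_pos hm0 hlam) hm0),
    mul_pos (mul_pos hd₁ hd₂) (mul_pos (add_pos hm0 hlam) hm0),
    mul_pos (mul_pos (mul_pos hd₁ hd₁) hd₂) (mul_pos hm0 hm0)]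
end

section
/- Let d₁, d₂, λ, v̄, k, L > 0 with d₁ < d₂, and suppose 0 < ξ < d₂((kπ/L)² + λ)/v̄. Set m = (kπ/L)². Then J₁ + J₂ < 0, where J₁ = (d₁d₂(m+λ) - ξd₁v̄)((d₁+1)m+λ) + ξd₂v̄((d₂+1)m+λ) and J₂ = -(d₁+d₂)²d₂ m(m+λ) - (d₁+d₂)d₂(m+λ)² - (d₁+d₂)d₁d₂² m². -/
/-- Case 2 (`d₁ < d₂`) in the proof that `χ_k^S < χ_k^H` for the growth-free system:
with `m = (kπ/L)²` and `0 < ξ < d₂(m+λ)/v̄`, the quantity `J₁ + J₂` is negative. -/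
theorem J_sum_neg_case2 (d₁ d₂ lam ξ vbar k L m J₁ J₂ : ℝ)
    (hd₁ : 0 < d₁) (hd₂ : 0 < d₂) (hlam : 0 < lam) (hv : 0 < vbar)
    (hk : 0 < k) (hL : 0 < L) (hd : d₁ < d₂)
    (hm : m = (k * Real.pi / L) ^ 2)
    (hξ : 0 < ξ) (hξ' : ξ < d₂ * ((k * Real.pi / L) ^ 2 + lam) / vbar)
    (hJ₁ : J₁ = (d₁ * d₂ * (m + lam) - ξ * d₁ * vbar) * ((d₁ + 1) * m + lam) +
      ξ * d₂ * vbar * ((d₂ + 1) * m + lam))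
    (hJ₂ : J₂ = -(d₁ + d₂) ^ 2 * d₂ * m * (m + lam) - (d₁ + d₂) * d₂ * (m + lam) ^ 2 -
      (d₁ + d₂) * d₁ * d₂ ^ 2 * m ^ 2) :
    J₁ + J₂ < 0 := by
  have hm0 : 0 < m := by
    rw [hm]
    positivity
  have hs : ξ * vbar < d₂ * (m + lam) := by
    rw [← hm] at hξ'
    exact (lt_div_iff₀ hv).mp hξ'
  have hcoef : 0 < d₂ * ((d₂ + 1) * m + lam) - d₁ * ((d₁ + 1) * m + lam) := by
    nlinarith [mul_pos (sub_pos.mpr hd) hm0, mul_pos (sub_pos.mpr hd) hlam,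
      mul_pos (mul_pos (add_pos hd₁ hd₂) (sub_pos.mpr hd)) hm0]
  have hrem : d₂ ^ 2 * (m + lam) * ((d₂ + 1) * m + lam) + J₂ < 0 := by
    rw [hJ₂]
    nlinarith [mul_pos (mul_pos (mul_pos hd₁ hd₂) hm0) (add_pos hm0 hlam),
      mul_pos (mul_pos (mul_pos hd₁ hd₂) hm0) hm0,
      mul_pos (mul_pos hd₁ (add_pos hm0 hlam)) (add_pos hm0 hlam),
      mul_pos (mul_pos (mul_pos hd₁ hd₁) hd₂) (mul_pos hm0 (add_pos hm0 hlam)),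
      mul_pos (mul_pos (mul_pos hd₁ (mul_pos hd₂ hd₂)) hm0) hm0]
  nlinarith [mul_lt_mul_of_pos_right hs hcoef, hrem]
end

section
/- Let d₁, d₂, λ, ū, v̄, k, L > 0 and 0 < ξ < d₂((kπ/L)²+λ)/v̄. Define m = (kπ/L)², χ_k^S = (d₁d₂(m+λ) - ξd₁v̄)/(d₂ū), A₁ = m+λ, A₂ = (d₁+d₂)m, A₃ = d₁d₂m², B₁ = (d₁+1)ūm² + λūm, B₂ = (d₂+1)v̄m² + λv̄m, and χ_k^H = (A₁A₂² + A₁²A₂ + A₂A₃ - ξB₂)/B₁. Then χ_k^S < χ_k^H. -/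
/-- For the growth-free system, the steady-state threshold `χ_k^S` is strictly below
the Hopf threshold `χ_k^H`. -/
theorem chiS_lt_chiH (d₁ d₂ lam ubar vbar ξ k L m χS A₁ A₂ A₃ B₁ B₂ χH : ℝ)
    (hd₁ : 0 < d₁) (hd₂ : 0 < d₂) (hlam : 0 < lam) (hu : 0 < ubar) (hv : 0 < vbar)
    (hk : 0 < k) (hL : 0 < L)
    (hξ : 0 < ξ) (hξ' : ξ < d₂ * ((k * Real.pi / L) ^ 2 + lam) / vbar)
    (hm : m = (k * Real.pi / L) ^ 2)
    (hχS : χS = (d₁ * d₂ * (m + lam) - ξ * d₁ * vbar) / (d₂ * ubar))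
    (hA₁ : A₁ = m + lam) (hA₂ : A₂ = (d₁ + d₂) * m) (hA₃ : A₃ = d₁ * d₂ * m ^ 2)
    (hB₁ : B₁ = (d₁ + 1) * ubar * m ^ 2 + lam * ubar * m)
    (hB₂ : B₂ = (d₂ + 1) * vbar * m ^ 2 + lam * vbar * m)
    (hχH : χH = (A₁ * A₂ ^ 2 + A₁ ^ 2 * A₂ + A₂ * A₃ - ξ * B₂) / B₁) :
    χS < χH := by
  have hmpos : 0 < m := by
    rw [hm]
    positivity
  rw [← hm] at hξ'
  have hkey : ξ * vbar < d₂ * (m + lam) := by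
    rw [lt_div_iff₀ hv] at hξ'
    linarith
  have hξv : 0 < ξ * vbar := mul_pos hξ hv
  subst hχS hχH hA₁ hA₂ hA₃ hB₁ hB₂
  rw [div_lt_div_iff₀ (by positivity) (by positivity)]
  obtain ⟨s, hs⟩ : ∃ s : ℝ, s = d₂ * (m + lam) - ξ * vbar := ⟨_, rfl⟩
  obtain ⟨D, hD⟩ : ∃ D : ℝ,
      D = d₁ * ((d₁ + 1) * m + lam) - d₂ * ((d₂ + 1) * m + lam) := ⟨_, rfl⟩
  obtain ⟨R, hR⟩ : ∃ R : ℝ, R = d₂ * ((m + lam) * (d₁ + d₂) ^ 2 * m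
      + (m + lam) ^ 2 * (d₁ + d₂) + d₁ * d₂ * (d₁ + d₂) * m ^ 2
      - d₂ * (m + lam) * ((d₂ + 1) * m + lam)) := ⟨_, rfl⟩
  have hspos : 0 < s := by rw [hs]; linarith
  have hRpos : 0 < R := by
    have : R = d₂ * ((m + lam) * (m * (d₁ ^ 2 + 2 * d₁ * d₂) + (m + lam) * d₁)
        + d₁ * d₂ * (d₁ + d₂) * m ^ 2) := by rw [hR]; ring
    rw [this]; positivity
  have hGgap : d₂ * (m + lam) * D + d₂ * ((m + lam) * m * d₂ * (2 * d₁ + d₂)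
      + (m + lam) ^ 2 * d₂ + d₁ * d₂ * (d₁ + d₂) * m ^ 2) = R := by
    rw [hD, hR]; ring
  have hGpos : 0 < d₂ * ((m + lam) * m * d₂ * (2 * d₁ + d₂)
      + (m + lam) ^ 2 * d₂ + d₁ * d₂ * (d₁ + d₂) * m ^ 2) := by positivity
  have hP : s * D < R := by
    rcases le_or_gt D 0 with hD0 | hD0
    · calc s * D ≤ 0 := mul_nonpos_of_nonneg_of_nonpos hspos.le hD0
        _ < R := hRpos
    · have h1 : s * D < d₂ * (m + lam) * D := by
        have h2 : s < d₂ * (m + lam) := by rw [hs]; linarith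
        exact mul_lt_mul_of_pos_right h2 hD0
      linarith
  -- lift: the goal difference equals ubar * m * (R - s * D)
  have hlift := mul_pos (mul_pos hu hmpos) (sub_pos.2 hP)
  rw [hs, hD, hR] at hlift
  nlinarith [hlift]
end
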